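/- Let S, I, R, B : [0,∞) → ℝ be a solution of the SIRB system S' = −βSI, I' = βSI − γI + βσαIR, R' = γI − βσIR, B' = βσ(1−α)IR with β>0, γ>0, σ>0, 0<α<1, initial conditions S(0)>0, I(0)>0, R(0)≥0 with (σβ/γ)·R(0) < 1, B(0)≥0, S(0)+I(0)+R(0)+B(0)=1, and suppose S(t)>0 and I(t)>0 for all t≥0. Let r(S) := (γ/(σβ))·(1 − (1 − (σβ/γ)·R(0))·(S/S(0))^σ). Then for every t ≥ 0, ∫_{S(0)}^{S(t)} σ·r(S)/S dS = (γ/(σβ))·ln((1 − (σβ/γ)R(t))/(1 − (σβ/γ)R(0))) + (R(t) − R(0)). -/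

import Mathlib

/-- Along solutions of the SIRB system with `(σβ/γ)R(0) < 1`,
`∫_(S 0)^(S t) σ r(x)/x dx = (γ/(σβ)) ln((1 − (σβ/γ)R t)/(1 − (σβ/γ)R 0)) + (R t − R 0)`
for all `t ≥ 0`, where `r` expresses `R` as a function of `S`. -/
theorem sirb_integral_identity (β γ σ α : ℝ) (S I R B : ℝ → ℝ)
    (hβ : 0 < β) (hγ : 0 < γ) (hσ : 0 < σ) (hα0 : 0 < α) (hα1 : α < 1)
    (hS' : ∀ t : ℝ, 0 ≤ t → HasDerivAt S (-(β * S t * I t)) t)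
    (hI' : ∀ t : ℝ, 0 ≤ t → HasDerivAt I (β * S t * I t - γ * I t + β * σ * α * I t * R t) t)
    (hR' : ∀ t : ℝ, 0 ≤ t → HasDerivAt R (γ * I t - β * σ * I t * R t) t)
    (hB' : ∀ t : ℝ, 0 ≤ t → HasDerivAt B (β * σ * (1 - α) * I t * R t) t)
    (hS0 : 0 < S 0) (hI0 : 0 < I 0) (hR0 : 0 ≤ R 0) (hB0 : 0 ≤ B 0)
    (hsum : S 0 + I 0 + R 0 + B 0 = 1)
    (hSpos : ∀ t : ℝ, 0 ≤ t → 0 < S t) (hIpos : ∀ t : ℝ, 0 ≤ t → 0 < I t)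
    (hR0lt1 : σ * β / γ * R 0 < 1)
    (r : ℝ → ℝ)
    (hr : ∀ x : ℝ, r x = γ / (σ * β) * (1 - (1 - σ * β / γ * R 0) * (x / S 0) ^ σ)) :
    ∀ t : ℝ, 0 ≤ t →
      (∫ x in (S 0)..(S t), σ * r x / x) =
        γ / (σ * β) * Real.log ((1 - σ * β / γ * R t) / (1 - σ * β / γ * R 0))
          + (R t - R 0) := by
  intro t ht
  set k : ℝ := σ * β / γ with hk
  have hkpos : 0 < k := div_pos (mul_pos hσ hβ) hγ
  have hkγ : k * γ = σ * β := by rw [hk]; field_simp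
  set c : ℝ := 1 - k * R 0 with hc
  have hcpos : 0 < c := by simp only [hc]; linarith [hR0lt1]
  -- invariant: (1 - k R t) * (S t)^(-σ) is constant on [0, ∞)
  set g : ℝ → ℝ := fun s => (1 - k * R s) * S s ^ (-σ) with hg
  have hgderiv : ∀ s : ℝ, 0 ≤ s → HasDerivAt g 0 s := by
    intro s hs
    have hSp := hSpos s hs
    have hu : HasDerivAt (fun s => 1 - k * R s) (-(k * (γ * I s - β * σ * I s * R s))) s :=
      (((hR' s hs).const_mul k).const_sub 1).congr_deriv (by ring)
    have hv : HasDerivAt (fun s => S s ^ (-σ)) ((-(β * S s * I s)) * (-σ) * S s ^ (-σ - 1)) s :=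
      (hS' s hs).rpow_const (Or.inl hSp.ne')
    have := hu.mul hv
    convert this using 1
    · rfl
    · rfl
    · rfl
    have hSpow : S s ^ (-σ) = S s ^ (-σ - 1) * S s := by
      have h := Real.rpow_add hSp (-σ - 1) 1
      rw [Real.rpow_one] at h
      rw [show -σ - 1 + 1 = -σ by ring] at h
      exact h
    rw [hSpow]
    linear_combination (S s ^ (-σ - 1) * S s * I s) * hkγ
  have hconst : g t = g 0 := by
    rcases eq_or_lt_of_le ht with h | h
    · rw [← h]
    · have hcont : ContinuousOn g (Set.Icc 0 t) := fun s hs =>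
        (hgderiv s hs.1).continuousAt.continuousWithinAt
      have := constant_of_has_deriv_right_zero hcont
        (fun s hs => (hgderiv s hs.1).hasDerivWithinAt) t (Set.right_mem_Icc.2 ht)
      exact this
  -- express 1 - k R t
  have hSpσ : (0:ℝ) < S t ^ σ := Real.rpow_pos_of_pos (hSpos t ht) σ
  have hS0σ : (0:ℝ) < S 0 ^ σ := Real.rpow_pos_of_pos hS0 σ
  set Q : ℝ := (S t / S 0) ^ σ with hQ
  have hQpos : 0 < Q := Real.rpow_pos_of_pos (div_pos (hSpos t ht) hS0) σ
  have hQeq : Q = S t ^ σ / S 0 ^ σ := Real.div_rpow (hSpos t ht).le hS0.le σ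
  have hut : 1 - k * R t = c * Q := by
    have h1 : (1 - k * R t) * S t ^ (-σ) = c * S 0 ^ (-σ) := hconst
    have h2 : S t ^ (-σ) = (S t ^ σ)⁻¹ := by
      rw [Real.rpow_neg (hSpos t ht).le]
    have h3 : S 0 ^ (-σ) = (S 0 ^ σ)⁻¹ := by
      rw [Real.rpow_neg hS0.le]
    rw [h2, h3] at h1
    rw [hQeq]
    field_simp at h1 ⊢
    linarith [h1]
  have hutpos : 0 < 1 - k * R t := hut ▸ mul_pos hcpos hQpos
  -- the antiderivative
  set F : ℝ → ℝ := fun x => γ / (σ * β) * (σ * Real.log x - c * (x / S 0) ^ σ) with hF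
  have hmem : ∀ x ∈ Set.uIcc (S 0) (S t), 0 < x := by
    intro x hx
    have := hx.1
    rcases le_total (S 0) (S t) with h | h
    · have := (Set.uIcc_of_le h ▸ hx).1; linarith [hS0]
    · have := (Set.uIcc_of_ge h ▸ hx).1; linarith [hSpos t ht]
  have hFderiv : ∀ x ∈ Set.uIcc (S 0) (S t), HasDerivAt F (σ * r x / x) x := by
    intro x hx
    have hxpos := hmem x hx
    have hlog : HasDerivAt Real.log x⁻¹ x := Real.hasDerivAt_log hxpos.ne'
    have hdiv : HasDerivAt (fun y : ℝ => y / S 0) (1 / S 0) x := by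
      simpa using (hasDerivAt_id x).div_const (S 0)
    have hpow : HasDerivAt (fun y : ℝ => (y / S 0) ^ σ) (1 / S 0 * σ * (x / S 0) ^ (σ - 1)) x :=
      hdiv.rpow_const (Or.inl (div_ne_zero hxpos.ne' hS0.ne'))
    have hd := ((hlog.const_mul σ).sub (hpow.const_mul c)).const_mul (γ / (σ * β))
    convert hd using 1
    · rfl
    · rfl
    · rfl
    have hsub : (x / S 0) ^ (σ - 1) = (x / S 0) ^ σ / (x / S 0) := by
      rw [Real.rpow_sub (div_pos hxpos hS0), Real.rpow_one]
    rw [hr, hsub]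
    field_simp
  have hcont : ContinuousOn (fun x => σ * r x / x) (Set.uIcc (S 0) (S t)) := by
    have : ContinuousOn (fun x : ℝ => (x / S 0) ^ σ) (Set.uIcc (S 0) (S t)) :=
      (continuousOn_id.div_const _).rpow_const
        (fun x hx => Or.inl (div_ne_zero (hmem x hx).ne' hS0.ne'))
    have h1 : ContinuousOn (fun x => σ * r x) (Set.uIcc (S 0) (S t)) := by
      simp only [hr]
      exact continuousOn_const.mul (continuousOn_const.mul
        (continuousOn_const.sub (continuousOn_const.mul this)))
    exact h1.div continuousOn_id (fun x hx => (hmem x hx).ne')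
  have hint : (∫ x in (S 0)..(S t), σ * r x / x) = F (S t) - F (S 0) :=
    intervalIntegral.integral_eq_sub_of_hasDerivAt hFderiv
      hcont.intervalIntegrable
  rw [hint, hF]
  simp only
  have hQ1 : ((S 0 : ℝ) / S 0) ^ σ = 1 := by rw [div_self hS0.ne', Real.one_rpow]
  have hlog1 : Real.log ((1 - k * R t) / (1 - k * R 0)) = σ * (Real.log (S t) - Real.log (S 0)) := by
    rw [hut, ← hc, mul_comm c Q, mul_div_assoc, div_self hcpos.ne', mul_one, hQ,
      Real.log_rpow (div_pos (hSpos t ht) hS0),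
      Real.log_div (hSpos t ht).ne' hS0.ne']
  have hRt : R t = (1 - c * Q) / k := by
    field_simp
    linarith [hut]
  have hR0' : R 0 = (1 - c) / k := by
    rw [hc]; field_simp; ring
  have hinv : γ / (σ * β) = 1 / k := by
    rw [hk]; rw [one_div_div]
  rw [← hQ, hQ1, hlog1, hRt, hR0', hinv]
  field_simp
  ring
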